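/- Suppose X and Y are δ-hyperbolic geodesic spaces and f : X → Y is (λ₁,μ₁)-large scale Lipschitz and (λ₂,μ₂)-radial with respect to a ∈ X. Then there exist constants A, B > 0 depending only on λ₁, μ₁, λ₂, μ₂, δ, a such that for all b, c ∈ X: (f(b),f(c))_{f(a)} ≥ A·(b,c)_a − B. In particular, f is visual. -/

import Mathlib

open Filter Metric Set

noncomputable section

namespace Gromov

variable {X : Type*} [MetricSpace X] {Y : Type*} [MetricSpace Y]

/-- The Gromov product `(x,y)_a = (d(x,a)+d(y,a)-d(x,y))/2`. -/
def gp (a x y : X) : ℝ := (dist x a + dist y a - dist x y) / 2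

/-- Gromov `δ`-hyperbolicity via the `δ/4`-inequality. -/
def IsDeltaHyperbolic (X : Type*) [MetricSpace X] (δ : ℝ) : Prop :=
  ∀ x y z w : X, gp w x y ≥ min (gp w x z) (gp w z y) - δ / 4

/-- `γ` is a geodesic starting at `x`, parametrized by arclength on `[0, M]`. -/
def IsGeodesicOn (γ : ℝ → X) (x : X) (M : ℝ) : Prop :=
  γ 0 = x ∧ ∀ s ∈ Icc (0:ℝ) M, ∀ t ∈ Icc (0:ℝ) M, dist (γ s) (γ t) = |s - t|

/-- Every two points are joined by a geodesic. -/
def IsGeodesicSpace (X : Type*) [MetricSpace X] : Prop :=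
  ∀ x y : X, ∃ γ : ℝ → X, IsGeodesicOn γ x (dist x y) ∧ γ (dist x y) = y

/-- An infinite geodesic ray emanating from `x`. -/
def IsRay (γ : ℝ → X) (x : X) : Prop :=
  γ 0 = x ∧ ∀ s ∈ Ici (0:ℝ), ∀ t ∈ Ici (0:ℝ), dist (γ s) (γ t) = |s - t|

/-- `f` is `(l, μ)`-large scale Lipschitz. -/
def IsLSL (f : X → Y) (l μ : ℝ) : Prop :=
  ∀ x y : X, dist (f x) (f y) ≤ l * dist x y + μ

/-- `f` is large scale Lipschitz. -/
def LSL (f : X → Y) : Prop := ∃ l μ : ℝ, 0 < l ∧ 0 < μ ∧ IsLSL f l μ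

/-- The `(l2, μ2)`-radial lower bound condition with respect to `x₀`:
on every finite geodesic emanating from `x₀`, `l2·d(x,y) - μ2 ≤ d(f(x),f(y))`. -/
def IsRadialWith (f : X → Y) (x₀ : X) (l2 μ2 : ℝ) : Prop :=
  ∀ M, 0 ≤ M → ∀ γ : ℝ → X, IsGeodesicOn γ x₀ M →
    ∀ s ∈ Icc (0:ℝ) M, ∀ t ∈ Icc (0:ℝ) M,
      l2 * dist (γ s) (γ t) - μ2 ≤ dist (f (γ s)) (f (γ t))

/-- `f` is a radial function with respect to `x₀`. -/
def Radial (f : X → Y) (x₀ : X) : Prop :=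
  LSL f ∧ ∃ l2 μ2 : ℝ, 0 < l2 ∧ 0 < μ2 ∧ IsRadialWith f x₀ l2 μ2

/-- `f` is visual: for some basepoint `a`, `(x_n,y_n)_a → ∞` implies
`(f(x_n),f(y_n))_{f(a)} → ∞`. -/
def VisualFn (f : X → Y) : Prop :=
  ∃ a : X, ∀ x y : ℕ → X,
    Tendsto (fun n => gp a (x n) (y n)) atTop atTop →
    Tendsto (fun n => gp (f a) (f (x n)) (f (y n))) atTop atTop

/-- `liminf_{i,j→∞} (x_i,x_j)_a = ∞`: the sequence converges to infinity. -/
def ConvSeq (a : X) (x : ℕ → X) : Prop :=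
  Tendsto (fun p : ℕ × ℕ => gp a (x p.1) (x p.2)) atTop atTop

/-- `liminf_{i,j→∞} (x_i,y_j)_a = ∞`: the two sequences are equivalent. -/
def SeqEquiv (a : X) (x y : ℕ → X) : Prop :=
  Tendsto (fun p : ℕ × ℕ => gp a (x p.1) (y p.2)) atTop atTop

def BSeq (a : X) : Type _ := {x : ℕ → X // ConvSeq a x}

/-- The sequential boundary `∂X` with basepoint `a`. -/
def Boundary (a : X) : Type _ := Quot (fun x y : BSeq a => SeqEquiv a x.1 y.1)

/-- The boundary point represented by a sequence. -/
def bpt (a : X) (x : ℕ → X) (hx : ConvSeq a x) : Boundary a :=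
  Quot.mk _ ⟨x, hx⟩

/-- `liminf_{i,j→∞} (x_i,y_j)_a` as an extended real. -/
def gpSeqs (a : X) (x y : ℕ → X) : EReal :=
  liminf (fun p : ℕ × ℕ => ((gp a (x p.1) (y p.2)) : EReal)) atTop

/-- The basic neighborhood `U(p,r)` in the sequential boundary. -/
def U (a : X) (p : Boundary a) (r : ℝ) : Set (Boundary a) :=
  {q | ∃ (x y : ℕ → X) (hx : ConvSeq a x) (hy : ConvSeq a y),
    bpt a x hx = p ∧ bpt a y hy = q ∧ (r : EReal) ≤ gpSeqs a x y}

instance (a : X) : TopologicalSpace (Boundary a) :=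
  TopologicalSpace.generateFrom {s | ∃ p r, 0 < r ∧ s = U a p r}

/-- The union `X ∪ ∂X`. -/
def Comp (a : X) : Type _ := X ⊕ Boundary a

def Comp.inl {a : X} (x : X) : Comp a := Sum.inl x
def Comp.inr {a : X} (p : Boundary a) : Comp a := Sum.inr p

/-- The extension of `U(p,r)` to `X ∪ ∂X`. -/
def UFull (a : X) (p : Boundary a) (r : ℝ) : Set (Comp a) :=
  {z : X ⊕ Boundary a | Sum.elim
    (fun x : X => ∃ (s : ℕ → X) (hs : ConvSeq a s), bpt a s hs = p ∧
      (r : EReal) ≤ liminf (fun i : ℕ => ((gp a (s i) x) : EReal)) atTop)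
    (fun q : Boundary a => q ∈ U a p r) z}

instance (a : X) : TopologicalSpace (Comp a) :=
  TopologicalSpace.generateFrom
    ({s | ∃ u : Set X, IsOpen u ∧ s = Comp.inl '' u} ∪
     {s | ∃ p r, 0 < r ∧ s = UFull a p r})

/-- The Gromov product of two boundary points:
`(p,q)_a = inf liminf_{i→∞} (x_i,y_i)_a` over representatives. -/
def gpBoundary (a : X) (p q : Boundary a) : EReal :=
  sInf {e : EReal | ∃ (x y : ℕ → X) (hx : ConvSeq a x) (hy : ConvSeq a y),
    bpt a x hx = p ∧ bpt a y hy = q ∧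
    e = liminf (fun i : ℕ => ((gp a (x i) (y i)) : EReal)) atTop}

/-- `K^{-e}` for an extended real exponent `e` (with `K^{-∞} = 0`). -/
def negPow (K : ℝ) (e : EReal) : ℝ :=
  if e = ⊤ then 0 else if e = ⊥ then 0 else Real.rpow K (-(e.toReal))

/-- `d` is a visual metric on `∂X` with parameters `K, C > 1`. -/
def IsVisualMetric (a : X) (d : Boundary a → Boundary a → ℝ) (K C : ℝ) : Prop :=
  1 < K ∧ 1 < C ∧ ∀ p q : Boundary a,
    negPow K (gpBoundary a p q) / C ≤ d p q ∧ d p q ≤ C * negPow K (gpBoundary a p q)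

/-- A map between sets with distinguished distance functions is Hölder. -/
def IsHolder {A B : Type*} (dA : A → A → ℝ) (dB : B → B → ℝ) (g : A → B) : Prop :=
  ∃ L α : ℝ, 0 < L ∧ 0 < α ∧ ∀ p q : A, dB (g p) (g q) ≤ L * Real.rpow (dA p q) α

/-- `(ξ₁,ξ₂)_a = liminf_{t→∞} (ξ₁(t),ξ₂(t))_a` for rays. -/
def gpRays (a : X) (ξ₁ ξ₂ : ℝ → X) : EReal :=
  liminf (fun t : ℝ => ((gp a (ξ₁ t) (ξ₂ t)) : EReal)) atTop

/-- The geodesic ray `ξ` represents the boundary point `p`. -/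
def RayRepresents (a : X) (ξ : ℝ → X) (p : Boundary a) : Prop :=
  ∃ h : ConvSeq a (fun n : ℕ => ξ n), bpt a (fun n : ℕ => ξ n) h = p

/-- `(x,ξ)_a = liminf_{n→∞} (x,ξ(n))_a`. -/
def gpPointRay (a x : X) (ξ : ℝ → X) : ℝ :=
  liminf (fun n : ℕ => gp a x (ξ n)) atTop

/-- `X` is a visual hyperbolic space with basepoint `a` and constant `D`. -/
def IsVisualSpace (a : X) (D : ℝ) : Prop :=
  ∀ x : X, ∃ ξ : ℝ → X, IsRay ξ a ∧ gpPointRay a x ξ > dist x a - D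

/-- A maximal finite geodesic from `a`: it admits no proper geodesic extension. -/
def MaximalGeodesic (ζ : ℝ → X) (a : X) (M : ℝ) : Prop :=
  IsGeodesicOn ζ a M ∧
    ¬ ∃ (M' : ℝ) (ζ' : ℝ → X), M < M' ∧ IsGeodesicOn ζ' a M' ∧
      ∀ t ∈ Icc (0:ℝ) M, ζ' t = ζ t

/-- `f : X → Y` is a radial extension with parameter `A` of `g : ∂X → ∂Y`
(`D` being the visuality constant of `X`). -/
def IsRadialExtension (a : X) (b : Y) (g : Boundary a → Boundary b)
    (A D : ℝ) (f : X → Y) : Prop :=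
  f a = b ∧
  ∀ x : X, x ≠ a →
    ((∃ (ξ : ℝ → X) (t : ℝ), IsRay ξ a ∧ 0 ≤ t ∧ ξ t = x) →
      ∃ (ξ : ℝ → X) (t : ℝ) (η : ℝ → Y), IsRay ξ a ∧ 0 ≤ t ∧ ξ t = x ∧ IsRay η b ∧
        (∃ p : Boundary a, RayRepresents a ξ p ∧ RayRepresents b η (g p)) ∧
        f x = η (A * t)) ∧
    ((¬ ∃ (ξ : ℝ → X) (t : ℝ), IsRay ξ a ∧ 0 ≤ t ∧ ξ t = x) →
      ∃ (M t : ℝ) (ζ ξ : ℝ → X) (η : ℝ → Y),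
        MaximalGeodesic ζ a M ∧ t ∈ Icc (0:ℝ) M ∧ ζ t = x ∧
        IsRay ξ a ∧ gpPointRay a (ζ M) ξ > dist (ζ M) a - D ∧ IsRay η b ∧
        (∃ p : Boundary a, RayRepresents a ξ p ∧ RayRepresents b η (g p)) ∧
        f x = η (A * t))

/-- `f` is coarsely surjective. -/
def CoarselySurjective (f : X → Y) : Prop :=
  ∃ S : ℝ, 0 < S ∧ ∀ y : Y, ∃ x : X, dist y (f x) ≤ S

/-- `f` is bornologous (coarse). -/
def Bornologous (f : X → Y) : Prop :=
  ∀ R : ℝ, 0 < R → ∃ S : ℝ, 0 < S ∧ ∀ x x' : X, dist x x' ≤ R → dist (f x) (f x') ≤ S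

/-- `f` is a coarse embedding. -/
def CoarseEmbedding (f : X → Y) : Prop :=
  Bornologous f ∧
    ∀ R : ℝ, 0 < R → ∃ S : ℝ, 0 < S ∧ ∀ x x' : X, dist (f x) (f x') ≤ R → dist x x' ≤ S

/-- `f` is coarsely `n`-to-1. -/
def CoarselyNto1 (f : X → Y) (n : ℕ) : Prop :=
  ∀ R : ℝ, 0 < R → ∃ S : ℝ, 0 < S ∧ ∀ A : Set Y, EMetric.diam A < ENNReal.ofReal R →
    ∃ B : Fin n → Set X, (f ⁻¹' A = ⋃ i, B i) ∧
      ∀ i, EMetric.diam (B i) < ENNReal.ofReal S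

/-- `g : ∂X → ∂Y` is the boundary map induced by `f`, i.e. `g [(x_n)] = [(f(x_n))]`. -/
def InducedBoundaryMap (a : X) (f : X → Y) (g : Boundary a → Boundary (f a)) : Prop :=
  ∀ (x : ℕ → X) (hx : ConvSeq a x) (hfx : ConvSeq (f a) (f ∘ x)),
    g (bpt a x hx) = bpt (f a) (f ∘ x) hfx

/-- `g` is (at most) `n`-to-1. -/
def NTo1 {A B : Type*} (g : A → B) (n : ℕ) : Prop :=
  ∀ b : B, ∃ s : Finset A, s.card ≤ n ∧ ∀ a : A, g a = b → a ∈ s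

/-- Covering dimension at most `n`: every open cover admits an open refinement
of multiplicity at most `n+1`. -/
def CovDimLE (Z : Type*) [TopologicalSpace Z] (n : ℕ) : Prop :=
  ∀ 𝒰 : Set (Set Z), (∀ u ∈ 𝒰, IsOpen u) → ⋃₀ 𝒰 = univ →
    ∃ 𝒱 : Set (Set Z), (∀ v ∈ 𝒱, IsOpen v) ∧ ⋃₀ 𝒱 = univ ∧
      (∀ v ∈ 𝒱, ∃ u ∈ 𝒰, v ⊆ u) ∧
      ∀ z : Z, {v ∈ 𝒱 | z ∈ v}.Finite ∧ {v ∈ 𝒱 | z ∈ v}.ncard ≤ n + 1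

/-- `c_{f,n}(r)`: the supremum of numbers `B` such that there exist `n+1` points
with mutual Gromov products `< r` whose images have mutual Gromov products `≥ B`. -/
def cfn (a : X) (b : Y) (f : X → Y) (n : ℕ) (r : ℝ) : EReal :=
  sSup {e : EReal | ∃ (B : ℝ) (x : Fin (n + 1) → X), e = (B : EReal) ∧
    (∀ i j, i ≠ j → gp a (x i) (x j) < r) ∧
    (∀ i j, i ≠ j → B ≤ gp b (f (x i)) (f (x j)))}

-- helpers

lemma gp_nonneg (a x y : X) : 0 ≤ gp a x y := by
  have h := dist_triangle x a y
  rw [dist_comm a y] at h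
  simp only [gp]; linarith

lemma gp_symm (a x y : X) : gp a x y = gp a y x := by
  simp only [gp, dist_comm x y]; ring

lemma delta_nonneg {δ : ℝ} (hX : IsDeltaHyperbolic X δ) (x : X) : 0 ≤ δ := by
  have h := hX x x x x
  simp only [gp, dist_self] at h
  norm_num at h
  linarith

lemma geo_dist_zero {γ : ℝ → X} {a : X} {D : ℝ} (hγ : IsGeodesicOn γ a D)
    {t : ℝ} (ht : t ∈ Icc (0:ℝ) D) : dist (γ t) a = t := by
  have hD : (0:ℝ) ≤ D := le_trans ht.1 ht.2
  have h := hγ.2 t ht 0 ⟨le_rfl, hD⟩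
  rw [hγ.1] at h
  rw [h]
  simp [abs_of_nonneg ht.1]

lemma radial_dist {f : X → Y} {l2 μ2 : ℝ} {a : X} (hrad : IsRadialWith f a l2 μ2)
    {γ : ℝ → X} {D : ℝ} (hγ : IsGeodesicOn γ a D)
    {t : ℝ} (ht : t ∈ Icc (0:ℝ) D) : l2 * t - μ2 ≤ dist (f (γ t)) (f a) := by
  have hD : (0:ℝ) ≤ D := le_trans ht.1 ht.2
  have h := hrad D hD γ hγ t ht 0 ⟨le_rfl, hD⟩
  rw [hγ.1] at h
  rwa [geo_dist_zero hγ ht] at h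

lemma radial_gp {f : X → Y} {l1 μ1 l2 μ2 : ℝ} (hl1 : 0 < l1)
    (hf : IsLSL f l1 μ1) {a : X} (hrad : IsRadialWith f a l2 μ2)
    {γ : ℝ → X} {D : ℝ} (hγ : IsGeodesicOn γ a D)
    {s u : ℝ} (hs : 0 ≤ s) (hsu : s ≤ u) (hu : u ≤ D)
    (hstep : l1 * (u - s) ≤ l2 * s) :
    (l2 * u - (2*μ2 + μ1))/2 ≤ gp (f a) (f (γ s)) (f (γ u)) := by
  have hsD : s ∈ Icc (0:ℝ) D := ⟨hs, hsu.trans hu⟩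
  have huD : u ∈ Icc (0:ℝ) D := ⟨hs.trans hsu, hu⟩
  have h1 := radial_dist hrad hγ hsD
  have h2 := radial_dist hrad hγ huD
  have h3 : dist (f (γ s)) (f (γ u)) ≤ l1 * (u - s) + μ1 := by
    have h := hf (γ s) (γ u)
    rw [hγ.2 s hsD u huD, abs_sub_comm, abs_of_nonneg (by linarith)] at h
    exact h
  simp only [gp]; linarith

lemma gp_chain {δ' : ℝ} (hδ' : 0 ≤ δ')
    (hZ : ∀ x y z w : Y, gp w x y ≥ min (gp w x z) (gp w z y) - δ') (w : Y) :
    ∀ (k : ℕ) (q : ℕ → Y) (c : ℝ),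
      (∀ i : ℕ, i ≤ k → gp w (q i) (q (i+1)) ≥ c + i * δ') →
      gp w (q 0) (q (k+1)) ≥ c - δ' := by
  intro k
  induction k with
  | zero =>
      intro q c h
      have h0 := h 0 le_rfl
      norm_num at h0
      linarith
  | succ n ih =>
      intro q c h
      have h1 : gp w (q 1) (q (n+1+1)) ≥ (c + δ') - δ' := by
        have := ih (fun i => q (i+1)) (c + δ') (fun i hi => by
          have h2 := h (i+1) (by omega)
          push_cast at h2 ⊢
          linarith)
        simpa using this
      have h0 := h 0 (Nat.zero_le _)
      norm_num at h0
      have h4 := hZ (q 0) (q (n+1+1)) (q 1) w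
      have hm : c ≤ min (gp w (q 0) (q 1)) (gp w (q 1) (q (n+1+1))) :=
        le_min (by linarith) (by linarith)
      linarith


lemma radial_chain {δ : ℝ} (hY : IsDeltaHyperbolic Y δ)
    {f : X → Y} {l1 μ1 l2 μ2 : ℝ}
    (hl1 : 0 < l1) (hμ1 : 0 < μ1) (hl2 : 0 < l2) (hμ2 : 0 < μ2)
    (hf : IsLSL f l1 μ1) {a : X} (hrad : IsRadialWith f a l2 μ2)
    {γ : ℝ → X} {D : ℝ} (hγ : IsGeodesicOn γ a D) {m : ℝ}
    (hm : 0 < m) (hmδ : δ / 4 ≤ l2 * l2 * m / (2 * l1)) (hmD : m ≤ D) :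
    (l2 * m - (2*μ2 + μ1))/2 - δ/4 ≤ gp (f a) (f (γ m)) (f (γ D)) := by
  have hY4 : ∀ x y z w : Y, gp w x y ≥ min (gp w x z) (gp w z y) - δ/4 := hY
  have hδ0 : 0 ≤ δ := delta_nonneg hY (f a)
  set ρ := l2 / l1 with hρdef
  have hρ : 0 < ρ := div_pos hl2 hl1
  have hex : ∃ k : ℕ, D ≤ m * (1 + ρ)^k := by
    obtain ⟨n, hn⟩ := pow_unbounded_of_one_lt (D / m) (by linarith : (1:ℝ) < 1 + ρ)
    refine ⟨n, le_of_lt ?_⟩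
    rw [div_lt_iff₀ hm] at hn
    nlinarith [hn]
  set K := Nat.find hex with hKdef
  have hKle : D ≤ m * (1 + ρ)^K := Nat.find_spec hex
  set t : ℕ → ℝ := fun i => min (m * (1+ρ)^i) D with htdef
  have ht0 : t 0 = m := by simp [htdef, hmD]
  have htK : t K = D := min_eq_right hKle
  by_cases hK0 : K = 0
  · have hDm : D = m := le_antisymm (by simpa [hK0] using hKle) hmD
    rw [hDm]
    have hgpe : gp (f a) (f (γ m)) (f (γ m)) = dist (f (γ m)) (f a) := by
      simp [gp]
    rw [hgpe]
    have h1 := radial_dist hrad hγ (⟨hm.le, hmD⟩ : m ∈ Icc (0:ℝ) D)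
    nlinarith [mul_pos hl2 hm]
  · obtain ⟨k, hk⟩ : ∃ k, K = k + 1 := ⟨K - 1, by omega⟩
    have hlt : ∀ i, i < K → m * (1+ρ)^i < D := fun i hi =>
      lt_of_not_ge (Nat.find_min hex hi)
    have hchain : ∀ i : ℕ, i ≤ k →
        gp (f a) (f (γ (t i))) (f (γ (t (i+1)))) ≥ (l2 * m - (2*μ2+μ1))/2 + i * (δ/4) := by
      intro i hi
      have hiK : i < K := by omega
      have hti : t i = m * (1+ρ)^i := min_eq_left (le_of_lt (hlt i hiK))
      have hpowpos : (0:ℝ) < (1+ρ)^i := by positivity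
      have hmono : t i ≤ t (i+1) := by
        apply le_min
        · rw [hti]
          have : (1+ρ)^i ≤ (1+ρ)^(i+1) := pow_le_pow_right₀ (by linarith) (by omega)
          nlinarith
        · rw [hti]; exact le_of_lt (hlt i hiK)
      have hub : t (i+1) ≤ (1+ρ) * (m * (1+ρ)^i) := by
        calc t (i+1) ≤ m * (1+ρ)^(i+1) := min_le_left _ _
        _ = (1+ρ) * (m*(1+ρ)^i) := by ring
      have hstep : l1 * (t (i+1) - t i) ≤ l2 * t i := by
        rw [hti]
        have h1 : t (i+1) - m*(1+ρ)^i ≤ ρ * (m*(1+ρ)^i) := by nlinarith [hub]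
        have h2 : l1 * (t (i+1) - m*(1+ρ)^i) ≤ l1 * (ρ * (m*(1+ρ)^i)) :=
          mul_le_mul_of_nonneg_left h1 hl1.le
        have h3 : l1 * (ρ * (m*(1+ρ)^i)) = l2 * (m*(1+ρ)^i) := by
          rw [hρdef]; field_simp
        linarith
      have hg := radial_gp hl1 hf hrad hγ (show (0:ℝ) ≤ t i by rw [hti]; positivity)
        hmono (min_le_right _ _) hstep
      have hbern : 1 + (i:ℝ) * ρ ≤ (1+ρ)^i := one_add_mul_le_pow (by linarith) i
      have htlb : m * (1 + (i:ℝ)*ρ) ≤ t (i+1) := by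
        have : m * (1 + (i:ℝ)*ρ) ≤ m * (1+ρ)^i := by nlinarith
        rw [hti] at hmono; linarith
      have hρm : δ/4 ≤ l2 * m * ρ / 2 := by
        have he : l2 * m * ρ / 2 = l2 * l2 * m / (2 * l1) := by
          rw [hρdef]; field_simp
        rw [he]; exact hmδ
      have hiδ : (i:ℝ) * (δ/4) ≤ (i:ℝ) * (l2*m*ρ/2) :=
        mul_le_mul_of_nonneg_left hρm (Nat.cast_nonneg i)
      have hl2t : l2 * (m * (1 + (i:ℝ)*ρ)) ≤ l2 * t (i+1) :=
        mul_le_mul_of_nonneg_left htlb hl2.le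
      have hexp : l2 * (m * (1 + (i:ℝ)*ρ)) = l2*m + (i:ℝ)*(l2*m*ρ) := by ring
      linarith
    have hfinal := gp_chain (by linarith) hY4 (f a) k (fun i => f (γ (t i)))
      ((l2*m - (2*μ2+μ1))/2) hchain
    have htk1 : t (k+1) = D := by rw [← hk]; exact htK
    rw [ht0, htk1] at hfinal
    linarith

lemma close_pts {δ : ℝ} (hX : IsDeltaHyperbolic X δ) (a b c : X)
    {γ σ : ℝ → X} (hγ : IsGeodesicOn γ a (dist a b)) (hb : γ (dist a b) = b)
    (hσ : IsGeodesicOn σ a (dist a c)) (hc : σ (dist a c) = c)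
    {m : ℝ} (hm : m = gp a b c) (hm0 : 0 ≤ m) (hmb : m ≤ dist a b)
    (hmc : m ≤ dist a c) : dist (γ m) (σ m) ≤ δ := by
  have hδ0 : 0 ≤ δ := delta_nonneg hX a
  have d1 : dist (γ m) a = m := geo_dist_zero hγ ⟨hm0, hmb⟩
  have d2 : dist (σ m) a = m := geo_dist_zero hσ ⟨hm0, hmc⟩
  have d3 : dist (γ m) b = dist a b - m := by
    have h := hγ.2 m ⟨hm0, hmb⟩ (dist a b) ⟨dist_nonneg, le_rfl⟩
    rw [hb] at h
    rw [h, abs_of_nonpos (by linarith)]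
    ring
  have d4 : dist c (σ m) = dist a c - m := by
    have h := hσ.2 (dist a c) ⟨dist_nonneg, le_rfl⟩ m ⟨hm0, hmc⟩
    rw [hc] at h
    rw [h, abs_of_nonneg (by linarith)]
  have g1 : gp a (γ m) b = m := by
    simp only [gp]; rw [d1, d3, dist_comm b a]; ring
  have g2 : gp a c (σ m) = m := by
    simp only [gp]; rw [d2, d4, dist_comm c a]; ring
  have h1 := hX (γ m) (σ m) b a
  have h2 := hX b (σ m) c a
  have hmin2 : m - δ/4 ≤ gp a b (σ m) := by
    have he : min (gp a b c) (gp a c (σ m)) = m := by rw [← hm, g2, min_self]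
    rw [he] at h2; exact h2
  have hmin1 : m - δ/4 ≤ min (gp a (γ m) b) (gp a b (σ m)) :=
    le_min (by rw [g1]; linarith) hmin2
  have key : m - δ/2 ≤ gp a (γ m) (σ m) := by linarith
  have hgpe : gp a (γ m) (σ m) = (m + m - dist (γ m) (σ m))/2 := by
    simp only [gp]; rw [d1, d2]
  linarith

theorem stmt9' {δ : ℝ} (hX : IsDeltaHyperbolic X δ) (hY : IsDeltaHyperbolic Y δ)
    (hgX : IsGeodesicSpace X)
    (f : X → Y) (l1 μ1 l2 μ2 : ℝ) (hl1 : 0 < l1) (hμ1 : 0 < μ1)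
    (hl2 : 0 < l2) (hμ2 : 0 < μ2)
    (hf : IsLSL f l1 μ1) (a : X) (hrad : IsRadialWith f a l2 μ2) :
    ∃ A B : ℝ, 0 < A ∧ 0 < B ∧
      ∀ b c : X, gp (f a) (f b) (f c) ≥ A * gp a b c - B := by
  have hδ0 : 0 ≤ δ := delta_nonneg hX a
  obtain ⟨A, hAdef⟩ : ∃ A : ℝ, A = l2/2 := ⟨_, rfl⟩
  have hA : 0 < A := by rw [hAdef]; positivity
  obtain ⟨m0, hm0def⟩ : ∃ m0 : ℝ, m0 = 2*l1*(δ/4)/(l2*l2) + 1 := ⟨_, rfl⟩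
  have hm0pos : 0 < m0 := by rw [hm0def]; positivity
  obtain ⟨C0, hC0def⟩ : ∃ C0 : ℝ, C0 = 2*μ2 + μ1 := ⟨_, rfl⟩
  obtain ⟨B, hBdef⟩ : ∃ B : ℝ,
      B = C0/2 + 3*(δ/4) + μ2 + (l1*δ + μ1)/2 + A*m0 + 1 := ⟨_, rfl⟩
  have hAm0 : 0 < A * m0 := mul_pos hA hm0pos
  have hl1δ : 0 ≤ l1 * δ := by positivity
  have hB : 0 < B := by linarith
  refine ⟨A, B, hA, hB, fun b c => ?_⟩
  obtain ⟨m, hm⟩ : ∃ m : ℝ, m = gp a b c := ⟨_, rfl⟩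
  rw [← hm]
  have hmnn : 0 ≤ m := hm ▸ gp_nonneg a b c
  by_cases hcase : m < m0
  · have h1 : A * m ≤ A * m0 := mul_le_mul_of_nonneg_left hcase.le hA.le
    have h2 := gp_nonneg (f a) (f b) (f c)
    linarith
  · push_neg at hcase
    have hbr : 2*(A*m) = l2 * m := by rw [hAdef]; ring
    have h1 : A * m0 ≤ A * m := mul_le_mul_of_nonneg_left hcase hA.le
    have hmb : m ≤ dist a b := by
      rw [hm]; simp only [gp]
      rw [dist_comm a b]
      have ht := dist_triangle c b a
      rw [dist_comm c b] at ht
      linarith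
    have hmc : m ≤ dist a c := by
      rw [hm]; simp only [gp]
      rw [dist_comm a c]
      have ht := dist_triangle b c a
      linarith
    have hmpos : 0 < m := lt_of_lt_of_le hm0pos hcase
    have hmδ : δ/4 ≤ l2*l2*m/(2*l1) := by
      have e1 : l2*l2*m0/(2*l1) = δ/4 + l2*l2/(2*l1) := by
        rw [hm0def]; field_simp
      have e2 : l2*l2*m0/(2*l1) ≤ l2*l2*m/(2*l1) := by gcongr
      have e3 : 0 < l2*l2/(2*l1) := by positivity
      linarith
    obtain ⟨γ, hγ, hb⟩ := hgX a b
    obtain ⟨σ, hσ, hc⟩ := hgX a c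
    have P1 := radial_chain hY hl1 hμ1 hl2 hμ2 hf hrad hγ hmpos hmδ hmb
    rw [hb] at P1
    have P3 := radial_chain hY hl1 hμ1 hl2 hμ2 hf hrad hσ hmpos hmδ hmc
    rw [hc] at P3
    have dcl : dist (γ m) (σ m) ≤ δ := close_pts hX a b c hγ hb hσ hc hm hmnn hmb hmc
    have r1 := radial_dist hrad hγ (⟨hmnn, hmb⟩ : m ∈ Icc (0:ℝ) (dist a b))
    have r2 := radial_dist hrad hσ (⟨hmnn, hmc⟩ : m ∈ Icc (0:ℝ) (dist a c))
    have r3 : dist (f (γ m)) (f (σ m)) ≤ l1*δ + μ1 := by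
      have h := hf (γ m) (σ m)
      have h2 : l1 * dist (γ m) (σ m) ≤ l1 * δ := mul_le_mul_of_nonneg_left dcl hl1.le
      linarith
    have P2 : l2*m - μ2 - (l1*δ + μ1)/2 ≤ gp (f a) (f (γ m)) (f (σ m)) := by
      simp only [gp]; linarith
    have h4a := hY (f b) (f c) (f (γ m)) (f a)
    have h4b := hY (f (γ m)) (f c) (f (σ m)) (f a)
    obtain ⟨T, hTdef⟩ : ∃ T : ℝ, T = A * m - B + δ/2 := ⟨_, rfl⟩
    have hT1 : T ≤ gp (f a) (f b) (f (γ m)) := by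
      rw [gp_symm (f a) (f b) (f (γ m))]
      linarith
    have hT3 : T ≤ gp (f a) (f (γ m)) (f (σ m)) := by linarith
    have hT4 : T ≤ gp (f a) (f (σ m)) (f c) := by linarith
    have hG2 : T - δ/4 ≤ gp (f a) (f (γ m)) (f c) := by
      have hmin : T ≤ min (gp (f a) (f (γ m)) (f (σ m))) (gp (f a) (f (σ m)) (f c)) :=
        le_min hT3 hT4
      linarith
    have hmin2 : T - δ/4 ≤ min (gp (f a) (f b) (f (γ m))) (gp (f a) (f (γ m)) (f c)) :=
      le_min (by linarith) hG2
    linarith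


/-- a `(λ₁,μ₁)`-LSL `(λ₂,μ₂)`-radial function between δ-hyperbolic
geodesic spaces satisfies `(f(b),f(c))_{f(a)} ≥ A·(b,c)_a − B` for constants
`A, B > 0`; in particular `f` is visual. -/
theorem stmt9 {X : Type*} [MetricSpace X] {Y : Type*} [MetricSpace Y]
    (δ : ℝ) (hX : IsDeltaHyperbolic X δ) (hY : IsDeltaHyperbolic Y δ)
    (hgX : IsGeodesicSpace X) (hgY : IsGeodesicSpace Y)
    (f : X → Y) (l1 μ1 l2 μ2 : ℝ) (hl1 : 0 < l1) (hμ1 : 0 < μ1)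
    (hl2 : 0 < l2) (hμ2 : 0 < μ2)
    (hf : IsLSL f l1 μ1) (a : X) (hrad : IsRadialWith f a l2 μ2) :
    (∃ A B : ℝ, 0 < A ∧ 0 < B ∧
      ∀ b c : X, gp (f a) (f b) (f c) ≥ A * gp a b c - B) ∧ VisualFn f := by
  obtain ⟨A, B, hA, hB, main⟩ := stmt9' hX hY hgX f l1 μ1 l2 μ2 hl1 hμ1 hl2 hμ2 hf a hrad
  refine ⟨⟨A, B, hA, hB, main⟩, a, fun x y hxy => ?_⟩
  have h1 : Tendsto (fun n => A * gp a (x n) (y n) - B) atTop atTop := by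
    have h2 := (hxy.const_mul_atTop hA)
    have h3 := tendsto_atTop_add_const_right atTop (-B) h2
    simpa [sub_eq_add_neg] using h3
  exact tendsto_atTop_mono (fun n => main (x n) (y n)) h1

end Gromov
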